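/- arXiv:1908.06939 — 3 statements merged into one kernel-verified Lean document; each statement's English description precedes it below -/
import Mathlib

section
/- Let V be the space of polynomials over a field K, and let (\phi_i)_{i \ge 0} be linear functionals on K[x] such that for every polynomial f of degree n, \phi_n(f) \ne 0 whenever the leading coefficient of f is nonzero, and \phi_i(f) = 0 for i > n (i.e., \phi_i lowers degree appropriately, as for \phi_i(f) = \varepsilon_{z_i}(\partial^i f) with a degree-lowering operator \partial). Then there exists a unique sequence of polynomials (f_n)_{n \ge 0} with deg f_n = n satisfying \phi_i(f_n) = [n]_q! \, \delta_{i,n} for all i, n, and this sequence is a basis of K[x]: every polynomial g satisfies g = \sum_{j=0}^{\deg g} \frac{\phi_j(g)}{[j]_q!} f_j. -/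
open Polynomial Finset

/-- `[n]_q = (1 - q^n)/(1 - q)`. -/
def qNat {K : Type*} [Field K] (q : K) (n : ℕ) : K := (1 - q ^ n) / (1 - q)

/-- `[n]_q! = [1]_q [2]_q ⋯ [n]_q`. -/
def qFact {K : Type*} [Field K] (q : K) (n : ℕ) : K :=
  ∏ k ∈ Finset.range n, qNat q (k + 1)

noncomputable def Fseq {K : Type*} [Field K] (q : K) (φ : ℕ → (Polynomial K →ₗ[K] K)) :
    ℕ → Polynomial K
  | n =>
    let G : Polynomial K := X ^ n -
      ∑ j ∈ (Finset.range n).attach, (φ j.1 (X ^ n) / qFact q j.1) • Fseq q φ j.1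
    (qFact q n / φ n G) • G
  decreasing_by exact Finset.mem_range.mp j.2

lemma Fseq_spec {K : Type*} [Field K] (q : K)
    (hq : ∀ n : ℕ, qFact q n ≠ 0)
    (φ : ℕ → (Polynomial K →ₗ[K] K))
    (hdiag : ∀ f : Polynomial K, f.leadingCoeff ≠ 0 → φ f.natDegree f ≠ 0)
    (htri : ∀ f : Polynomial K, ∀ i : ℕ, f.natDegree < i → φ i f = 0) :
    ∀ n : ℕ, (Fseq q φ n).natDegree = n ∧
      ∀ i : ℕ, φ i (Fseq q φ n) = if i = n then qFact q n else 0 := by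
  intro n
  induction n using Nat.strong_induction_on with
  | _ n IH =>
    set S : Polynomial K :=
      ∑ j ∈ (Finset.range n).attach, (φ j.1 (X ^ n) / qFact q j.1) • Fseq q φ j.1 with hSdef
    set G : Polynomial K := X ^ n - S with hGdef
    have hFn : Fseq q φ n = (qFact q n / φ n G) • G := by
      rw [Fseq]
    have hSdeg : S.degree < (X ^ n : Polynomial K).degree := by
      rw [degree_X_pow]
      refine lt_of_le_of_lt (Polynomial.degree_sum_le _ _) ?_
      rw [Finset.sup_lt_iff (by exact_mod_cast WithBot.bot_lt_coe n)]
      intro j hj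
      refine lt_of_le_of_lt (Polynomial.degree_smul_le _ _) ?_
      have hjn : j.1 < n := Finset.mem_range.mp j.2
      calc (Fseq q φ j.1).degree ≤ (Fseq q φ j.1).natDegree := Polynomial.degree_le_natDegree
        _ = (j.1 : WithBot ℕ) := by exact_mod_cast congrArg Nat.cast (IH j.1 hjn).1
        _ < (n : WithBot ℕ) := by exact_mod_cast hjn
    have hGdeg : G.degree = (n : WithBot ℕ) := by
      rw [hGdef, Polynomial.degree_sub_eq_left_of_degree_lt hSdeg, degree_X_pow]
    have hGnat : G.natDegree = n := natDegree_eq_of_degree_eq_some hGdeg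
    have hGlc : G.leadingCoeff = 1 := by
      rw [hGdef, Polynomial.leadingCoeff_sub_of_degree_lt hSdeg, leadingCoeff_X_pow]
    have hφnG : φ n G ≠ 0 := by
      have := hdiag G (by rw [hGlc]; exact one_ne_zero)
      rwa [hGnat] at this
    have hc : qFact q n / φ n G ≠ 0 := div_ne_zero (hq n) hφnG
    constructor
    · rw [hFn]
      rw [Polynomial.smul_eq_C_mul, Polynomial.natDegree_C_mul hc, hGnat]
    · intro i
      have hφiG : ∀ i : ℕ, i < n → φ i G = 0 := by
        intro i hin
        rw [hGdef, map_sub, map_sum]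
        have hsum : ∑ j ∈ (Finset.range n).attach,
            φ i ((φ j.1 (X ^ n) / qFact q j.1) • Fseq q φ j.1)
            = φ i (X ^ n) := by
          have : ∀ j : {x // x ∈ Finset.range n},
              φ i ((φ j.1 (X ^ n) / qFact q j.1) • Fseq q φ j.1)
              = if i = j.1 then φ i (X ^ n) else 0 := by
            intro j
            have hjn : j.1 < n := Finset.mem_range.mp j.2
            rw [map_smul, smul_eq_mul, (IH j.1 hjn).2 i]
            by_cases h : i = j.1
            · subst h
              rw [if_pos rfl, if_pos rfl, div_mul_cancel₀ _ (hq j.1)]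
            · rw [if_neg h, if_neg h, mul_zero]
          rw [Finset.sum_congr rfl (fun j _ => this j),
            Finset.sum_attach (Finset.range n) (fun j => if i = j then φ i (X ^ n) else 0)]
          simp [Finset.sum_ite_eq, Finset.mem_range.mpr hin]
        rw [hsum, sub_self]
      rw [hFn, map_smul, smul_eq_mul]
      rcases lt_trichotomy i n with h | h | h
      · rw [hφiG i h, mul_zero, if_neg (Nat.ne_of_lt h)]
      · subst h
        rw [if_pos rfl, div_mul_cancel₀ _ hφnG]
      · rw [htri G i (by rw [hGnat]; exact h), mul_zero, if_neg (Nat.ne_of_gt h)]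

/-- existence and uniqueness of a polynomial sequence
q-biorthogonal to a degree-triangular sequence of linear functionals, and
the basis expansion property. -/
theorem biorthogonal_basis_exists_unique {K : Type*} [Field K] (q : K)
    (hq : ∀ n : ℕ, qFact q n ≠ 0)
    (φ : ℕ → (Polynomial K →ₗ[K] K))
    (hdiag : ∀ f : Polynomial K, f.leadingCoeff ≠ 0 → φ f.natDegree f ≠ 0)
    (htri : ∀ f : Polynomial K, ∀ i : ℕ, f.natDegree < i → φ i f = 0) :
    (∃! F : ℕ → Polynomial K,
        (∀ n, (F n).natDegree = n) ∧
        (∀ i n : ℕ, φ i (F n) = if i = n then qFact q n else 0)) ∧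
    (∀ F : ℕ → Polynomial K,
        (∀ n, (F n).natDegree = n) →
        (∀ i n : ℕ, φ i (F n) = if i = n then qFact q n else 0) →
        ∀ g : Polynomial K,
          g = ∑ j ∈ Finset.range (g.natDegree + 1), (φ j g / qFact q j) • F j) := by
  have key : ∀ f : Polynomial K, (∀ i, φ i f = 0) → f = 0 := by
    intro f hf
    by_contra h
    exact hdiag f (Polynomial.leadingCoeff_ne_zero.mpr h) (hf f.natDegree)
  have hspec := Fseq_spec q hq φ hdiag htri
  constructor
  · refine ⟨Fseq q φ, ⟨fun n => (hspec n).1, fun i n => (hspec n).2 i⟩, ?_⟩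
    rintro F ⟨hFdeg, hFφ⟩
    funext n
    have : F n - Fseq q φ n = 0 := by
      apply key
      intro i
      rw [map_sub, hFφ i n, (hspec n).2 i, sub_self]
    exact sub_eq_zero.mp this
  · intro F hFdeg hFφ g
    have : g - ∑ j ∈ Finset.range (g.natDegree + 1), (φ j g / qFact q j) • F j = 0 := by
      apply key
      intro i
      rw [map_sub, map_sum]
      have hsum : ∑ j ∈ Finset.range (g.natDegree + 1), φ i ((φ j g / qFact q j) • F j)
          = if i ∈ Finset.range (g.natDegree + 1) then φ i g else 0 := by
        have : ∀ j ∈ Finset.range (g.natDegree + 1),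
            φ i ((φ j g / qFact q j) • F j) = if i = j then φ i g else 0 := by
          intro j _
          rw [map_smul, smul_eq_mul, hFφ i j]
          by_cases h : i = j
          · subst h; simp [div_mul_cancel₀ _ (hq i)]
          · simp [h]
        rw [Finset.sum_congr rfl this, Finset.sum_ite_eq]
      rw [hsum]
      by_cases h : i ∈ Finset.range (g.natDegree + 1)
      · rw [if_pos h, sub_self]
      · rw [if_neg h]
        have : g.natDegree < i := by
          simpa [Finset.mem_range, Nat.lt_succ_iff, not_le] using h
        rw [htri g i this, sub_zero]
    exact sub_eq_zero.mp this
end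

section
/- Let K[x] be polynomials over a field K and \partial : K[x] \to K[x] a linear operator satisfying deg(\partial f) = deg(f) - 1 for all nonconstant f and \partial(c) = 0 for constants c, and suppose (p_n)_{n \ge 0} satisfies p_0 = 1, deg p_n = n, p_n(0) = 0 for n \ge 1, and \partial p_n = [n]_q p_{n-1}. Then \varepsilon_0(\partial^i p_n) = [n]_q! \delta_{i,n} for all 0 \le i, n. -/
open Polynomial Finset

/-- the basic sequence of a q-delta operator is biorthogonal to
evaluation at 0 composed with powers of the operator:
`ε₀(∂^i pₙ) = [n]_q! δ_{i,n}`. -/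
theorem basic_sequence_biorthogonal {K : Type*} [Field K] (q : K)
    (hq : ∀ n : ℕ, 1 ≤ n → q ^ n ≠ 1)
    (D : Polynomial K →ₗ[K] Polynomial K)
    (hDdeg : ∀ f : Polynomial K, 0 < f.natDegree → (D f).natDegree = f.natDegree - 1)
    (hDconst : ∀ c : K, D (Polynomial.C c) = 0)
    (p : ℕ → Polynomial K)
    (hp0 : p 0 = 1)
    (hpdeg : ∀ n, (p n).natDegree = n)
    (hpeval : ∀ n : ℕ, 1 ≤ n → (p n).eval 0 = 0)
    (hDp : ∀ n : ℕ, D (p (n + 1)) = qNat q (n + 1) • p n) :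
    ∀ i n : ℕ, ((D ^ i) (p n)).eval 0 = if i = n then qFact q n else 0 := by
  -- key lemma: for i ≤ n, D^i pₙ = (∏_{k<i} [n-k]_q) • p_{n-i}
  have key : ∀ i n : ℕ, i ≤ n →
      (D ^ i) (p n) = (∏ k ∈ Finset.range i, qNat q (n - k)) • p (n - i) := by
    intro i
    induction i with
    | zero => intro n _; simp
    | succ i ih =>
      intro n hin
      have hi : i ≤ n := Nat.le_of_succ_le hin
      rw [pow_succ', Module.End.mul_apply, ih n hi, map_smul]
      have hni : n - i = (n - (i + 1)) + 1 := by omega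
      rw [hni, hDp, smul_smul, Finset.prod_range_succ, ← hni]
  intro i n
  rcases lt_trichotomy i n with h | h | h
  · -- i < n : eval is 0
    rw [if_neg (Nat.ne_of_lt h), key i n h.le, eval_smul, smul_eq_mul,
      hpeval (n - i) (by omega), mul_zero]
  · subst h
    rw [if_pos rfl, key i i le_rfl]
    simp only [Nat.sub_self, hp0, eval_smul, smul_eq_mul, eval_one, mul_one]
    rw [qFact, ← Finset.prod_range_reflect]
    apply Finset.prod_congr rfl
    intro k hk
    simp only [Finset.mem_range] at hk
    congr 1
    omega
  · -- i > n : D^i pₙ = 0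
    have hzero : (D ^ (n + 1)) (p n) = 0 := by
      rw [pow_succ', Module.End.mul_apply, key n n le_rfl, map_smul,
        Nat.sub_self, hp0]
      have : (1 : Polynomial K) = Polynomial.C 1 := by simp
      rw [this, hDconst, smul_zero]
    have : (D ^ i) (p n) = 0 := by
      obtain ⟨m, rfl⟩ : ∃ m, i = m + (n + 1) := ⟨i - (n + 1), by omega⟩
      rw [pow_add, Module.End.mul_apply, hzero, map_zero]
    rw [this, if_neg (by omega)]
    simp
end

section
/- If in the composition formula T_n = \sum_{k=1}^n \sum_{(b_1,...,b_k) \models n} \prod_{i=1}^k \binom{s_i}{b_i}_q \cdot c_{b_i, s_i} one sets all weights c_{b,s} = 1, then T_n satisfies T_n = \sum_{k=0}^{n-1} \binom{n}{k}_q T_k with T_0 = 1; i.e., the number of weighted monomials in the constant term of the n-th generalized q-Gončarov polynomial is the q-Fubini number f_{n,q}. -/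
open Polynomial Finset

/-- The Gaussian (q-)binomial coefficient as a polynomial in `q` over `ℤ`,
via the q-Pascal recurrence. -/
noncomputable def qBin : ℕ → ℕ → Polynomial ℤ
  | _, 0 => 1
  | 0, _ + 1 => 0
  | n + 1, k + 1 => qBin n k + Polynomial.X ^ (k + 1) * qBin n (k + 1)

/-- For a list of block sizes `(b₁, …, b_k)` with partial sums `sᵢ = b₁ + ⋯ + bᵢ`,
the product `∏ᵢ qBin sᵢ bᵢ`. -/
noncomputable def compProd (l : List ℕ) : Polynomial ℤ :=
  ∏ i ∈ Finset.range l.length, qBin ((l.take (i + 1)).sum) (l.getD i 0)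

lemma qBin_zero (n : ℕ) : qBin n 0 = 1 := by cases n <;> rfl

lemma qBin_zero_succ (k : ℕ) : qBin 0 (k + 1) = 0 := rfl

lemma qBin_succ_succ (n k : ℕ) :
    qBin (n + 1) (k + 1) = qBin n k + Polynomial.X ^ (k + 1) * qBin n (k + 1) := rfl

lemma qBin_eq_zero : ∀ n k : ℕ, n < k → qBin n k = 0 := by
  intro n
  induction n with
  | zero => intro k hk; obtain ⟨j, rfl⟩ := Nat.exists_eq_add_of_lt hk; rfl
  | succ m ih =>
      intro k hk
      obtain ⟨j, rfl⟩ : ∃ j, k = (m + 1 + j) + 1 := ⟨k - m - 2, by omega⟩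
      rw [qBin_succ_succ, ih _ (by omega), ih _ (by omega), mul_zero, add_zero]

lemma qBin_self : ∀ n : ℕ, qBin n n = 1 := by
  intro n
  induction n with
  | zero => rfl
  | succ m ih =>
      rw [qBin_succ_succ, ih, qBin_eq_zero m (m + 1) (by omega), mul_zero, add_zero]

/-- The "other" q-Pascal recurrence. -/
lemma qBin_succ_succ' : ∀ n k : ℕ, k ≤ n →
    qBin (n + 1) (k + 1) = Polynomial.X ^ (n - k) * qBin n k + qBin n (k + 1) := by
  intro n
  induction n with
  | zero =>
      intro k hk
      interval_cases k
      simp [qBin_succ_succ, qBin_zero, qBin_zero_succ]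
  | succ m ih =>
      intro k hk
      rcases Nat.eq_or_lt_of_le hk with rfl | hlt
      · rw [qBin_self, qBin_eq_zero (m + 1) (m + 2) (by omega), add_zero, Nat.sub_self,
          pow_zero, one_mul, qBin_self]
      · have hk' : k ≤ m := by omega
        cases k with
        | zero =>
            have h2 : qBin m 0 + Polynomial.X ^ (0 + 1) * qBin m (0 + 1)
                = Polynomial.X ^ (m - 0) * qBin m 0 + qBin m (0 + 1) := by
              rw [← qBin_succ_succ]; exact ih 0 (Nat.zero_le m)
            rw [qBin_succ_succ, ih 0 (Nat.zero_le m)]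
            simp only [Nat.sub_zero, qBin_zero, mul_one, pow_one, zero_add] at h2 ⊢
            linear_combination h2
        | succ j =>
            have hj : j ≤ m := by omega
            have hj' : j + 1 ≤ m := hk'
            obtain ⟨a, rfl⟩ : ∃ a, m = a + (j + 1) := ⟨m - (j + 1), by omega⟩
            have hA := ih j hj
            have hB := ih (j + 1) hj'
            rw [qBin_succ_succ (a + (j+1)) j] at hA
            rw [qBin_succ_succ (a + (j+1)) (j+1)] at hB
            rw [show a + (j + 1) - j = a + 1 by omega] at hA
            rw [show a + (j + 1) - (j + 1) = a by omega] at hB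
            rw [qBin_succ_succ, qBin_succ_succ (a + (j+1)) j, qBin_succ_succ (a + (j+1)) (j+1),
              show a + (j + 1) + 1 - (j + 1) = a + 1 by omega]
            linear_combination hA + Polynomial.X ^ (j + 1 + 1) * hB

/-- Symmetry of Gaussian binomials. -/
lemma qBin_symm : ∀ n k : ℕ, k ≤ n → qBin n k = qBin n (n - k) := by
  intro n
  induction n with
  | zero => intro k hk; interval_cases k; rfl
  | succ m ih =>
      intro k hk
      cases k with
      | zero => rw [qBin_zero, Nat.sub_zero, qBin_self]
      | succ j =>
          rcases Nat.eq_or_lt_of_le hk with h | hlt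
          · rw [h, qBin_self, Nat.sub_self, qBin_zero]
          · have hj1 : j + 1 ≤ m := by omega
            have hj : j ≤ m := by omega
            have hd : m + 1 - (j + 1) = (m - (j + 1)) + 1 := by omega
            rw [qBin_succ_succ, ih j hj, ih (j + 1) hj1, hd,
              qBin_succ_succ' m (m - (j + 1)) (by omega),
              show m - (m - (j + 1)) = j + 1 by omega,
              show m - (j + 1) + 1 = m - j by omega]
            ring

lemma compProd_nil : compProd [] = 1 := rfl

lemma compProd_concat (l : List ℕ) (b : ℕ) :
    compProd (l ++ [b]) = compProd l * qBin (l.sum + b) b := by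
  unfold compProd
  rw [List.length_append, List.length_singleton, Finset.prod_range_succ]
  congr 1
  · apply Finset.prod_congr rfl
    intro i hi
    rw [Finset.mem_range] at hi
    rw [List.take_append_of_le_length (by omega), List.getD_append _ _ _ _ hi]
  · rw [List.take_of_length_le (by simp), List.sum_append, List.sum_singleton,
      List.getD_append_right _ _ _ _ (le_refl _), Nat.sub_self]
    rfl

lemma composition_zero_blocks (c : Composition 0) : c.blocks = [] := by
  cases h : c.blocks with
  | nil => rfl
  | cons a l =>
      exfalso
      have ha : 0 < a := c.blocks_pos (h ▸ List.mem_cons_self (a := a) (l := l))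
      have hs := c.blocks_sum
      rw [h, List.sum_cons] at hs
      omega

lemma compSum_zero : (∑ c : Composition 0, compProd c.blocks) = 1 := by
  rw [Finset.sum_congr rfl (fun c _ => by rw [composition_zero_blocks c, compProd_nil]),
    Finset.sum_const, Finset.card_univ, composition_card]
  simp

lemma sigma_eq (l : List ℕ) (p : ∀ {i : ℕ}, i ∈ l → 0 < i) (k : ℕ) (c : Composition k)
    (hl : l = c.blocks) :
    (⟨l.sum, ⟨l, p, rfl⟩⟩ : (m : ℕ) × Composition m) = ⟨k, c⟩ := by
  obtain ⟨b, bp, bs⟩ := c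
  dsimp only at hl
  subst hl
  subst bs
  rfl

lemma compSum_rec (n : ℕ) (hn : 1 ≤ n) :
    (∑ c : Composition n, compProd c.blocks)
      = ∑ k ∈ Finset.range n, qBin n k * ∑ c : Composition k, compProd c.blocks := by
  simp_rw [Finset.mul_sum]
  rw [Finset.sum_sigma' (Finset.range n) (fun k => (Finset.univ : Finset (Composition k)))
    (fun k c => qBin n k * compProd c.blocks)]
  refine Finset.sum_bij'
    (fun (c : Composition n) (_ : c ∈ Finset.univ) =>
      (⟨c.blocks.dropLast.sum,
        ⟨c.blocks.dropLast, fun h => c.blocks_pos (List.dropLast_subset _ h), rfl⟩⟩ :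
        (k : ℕ) × Composition k))
    (fun p hp =>
      ⟨p.2.blocks ++ [n - p.1], ?_, ?_⟩)
    ?_ (fun _ _ => Finset.mem_univ _) ?_ ?_ ?_
  · -- blocks_pos of j
    intro i hi
    rw [List.mem_append] at hi
    rcases hi with hi | hi
    · exact p.2.blocks_pos hi
    · rw [List.mem_singleton] at hi
      have hk : p.1 ∈ Finset.range n := (Finset.mem_sigma.1 hp).1
      rw [Finset.mem_range] at hk
      omega
  · -- blocks_sum of j
    rw [List.sum_append, List.sum_singleton, p.2.blocks_sum]
    have hk : p.1 ∈ Finset.range n := (Finset.mem_sigma.1 hp).1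
    rw [Finset.mem_range] at hk
    omega
  · -- i maps into sigma
    intro c _
    rw [Finset.mem_sigma]
    refine ⟨?_, Finset.mem_univ _⟩
    rw [Finset.mem_range]
    dsimp only
    have hne : c.blocks ≠ [] := by
      intro h
      have := c.blocks_sum
      rw [h, List.sum_nil] at this
      omega
    have key : c.blocks.dropLast.sum + c.blocks.getLast hne = n := by
      conv_rhs => rw [← c.blocks_sum, ← List.dropLast_append_getLast hne]
      rw [List.sum_append, List.sum_singleton]
    have hpos : 0 < c.blocks.getLast hne := c.blocks_pos (List.getLast_mem hne)
    omega
  · -- left inverse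
    intro c _
    apply Composition.ext
    dsimp only
    have hne : c.blocks ≠ [] := by
      intro h
      have := c.blocks_sum
      rw [h, List.sum_nil] at this
      omega
    have key : c.blocks.dropLast.sum + c.blocks.getLast hne = n := by
      conv_rhs => rw [← c.blocks_sum, ← List.dropLast_append_getLast hne]
      rw [List.sum_append, List.sum_singleton]
    rw [show n - c.blocks.dropLast.sum = c.blocks.getLast hne by omega,
      List.dropLast_append_getLast hne]
  · -- right inverse
    rintro ⟨k, c⟩ hp
    exact sigma_eq _ _ k c List.dropLast_concat
  · -- values agree
    intro c _
    dsimp only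
    have hne : c.blocks ≠ [] := by
      intro h
      have := c.blocks_sum
      rw [h, List.sum_nil] at this
      omega
    have key : c.blocks.dropLast.sum + c.blocks.getLast hne = n := by
      conv_rhs => rw [← c.blocks_sum, ← List.dropLast_append_getLast hne]
      rw [List.sum_append, List.sum_singleton]
    conv_lhs => rw [← List.dropLast_append_getLast hne]
    rw [compProd_concat, show c.blocks.getLast hne = n - c.blocks.dropLast.sum by omega,
      show c.blocks.dropLast.sum + (n - c.blocks.dropLast.sum) = n by omega,
      ← qBin_symm n c.blocks.dropLast.sum (by omega), mul_comm]

/-- with all weights set to 1, the composition formula `T`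
satisfies the q-Fubini recurrence `T 0 = 1`, `T n = ∑_{k<n} qBin n k * T k`,
hence equals the q-Fubini numbers. -/
theorem compSum_is_qFubini :
    (∑ c : Composition 0, compProd c.blocks) = 1 ∧
    (∀ n : ℕ, 1 ≤ n →
      (∑ c : Composition n, compProd c.blocks)
        = ∑ k ∈ Finset.range n, qBin n k * ∑ c : Composition k, compProd c.blocks) ∧
    (∀ f : ℕ → Polynomial ℤ,
      f 0 = 1 →
      (∀ n : ℕ, 1 ≤ n → f n = ∑ k ∈ Finset.range n, qBin n k * f k) →
      ∀ n : ℕ, (∑ c : Composition n, compProd c.blocks) = f n) := by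
  refine ⟨compSum_zero, fun n hn => compSum_rec n hn, ?_⟩
  intro f h0 hrec n
  induction n using Nat.strong_induction_on with
  | _ n ih =>
    rcases Nat.eq_zero_or_pos n with rfl | hn
    · rw [compSum_zero, h0]
    · rw [compSum_rec n hn, hrec n hn]
      exact Finset.sum_congr rfl fun k hk => by rw [ih k (Finset.mem_range.1 hk)]
end
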